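/- For any R, R' ∈ SO(n), there exists a skew-symmetric matrix W such that R' = R·exp(W) and all the nonzero eigenvalues of W are of the form ±iλ with λ ∈ (-π, π]. -/

import Mathlib

open Matrix
noncomputable section

def SO (n : ℕ) : Set (Matrix (Fin n) (Fin n) ℝ) :=
  {R | Rᵀ * R = 1 ∧ R.det = 1}

/-- `μ` is a (complex) eigenvalue of the real matrix `W`. -/
def IsEigenvalue {n : ℕ} (W : Matrix (Fin n) (Fin n) ℝ) (μ : ℂ) : Prop :=
  ∃ v : Fin n → ℂ, v ≠ 0 ∧ (W.map (Complex.ofReal)).mulVec v = μ • v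

open NormedSpace

attribute [local instance] Matrix.linftyOpSemiNormedRing Matrix.linftyOpNormedRing
  Matrix.linftyOpNormedAlgebra

variable {N : ℕ}

/-- the algebra hom `ℝ × ℂ → M` sending `(r, a+bi) ↦ r(1-p) + a p + b J`. -/
def psi (p J : Matrix (Fin N) (Fin N) ℝ) (x : ℝ × ℂ) : Matrix (Fin N) (Fin N) ℝ :=
  x.1 • (1 - p) + x.2.re • p + x.2.im • J

lemma psi_linear (p J : Matrix (Fin N) (Fin N) ℝ) :
    IsLinearMap ℝ (psi p J) := by
  constructor
  · intro x y
    simp [psi, Complex.add_re, Complex.add_im, add_smul]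
    abel
  · intro c x
    simp [psi, Complex.smul_re, Complex.smul_im, smul_smul, smul_add]

lemma psi_mul (p J : Matrix (Fin N) (Fin N) ℝ) (hp : p * p = p) (hpJ : p * J = J)
    (hJp : J * p = J) (hJ2 : J * J = -p) (x y : ℝ × ℂ) :
    psi p J (x * y) = psi p J x * psi p J y := by
  obtain ⟨r, z⟩ := x
  obtain ⟨s, w⟩ := y
  simp only [psi, Prod.mk_mul_mk, Complex.mul_re, Complex.mul_im]
  have h1p : (1 - p) * (1 - p) = 1 - p := by noncomm_ring [hp]
  have h1pp : (1 - p) * p = 0 := by noncomm_ring [hp]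
  have hp1p : p * (1 - p) = 0 := by noncomm_ring [hp]
  have h1pJ : (1 - p) * J = 0 := by noncomm_ring [hpJ]
  have hJ1p : J * (1 - p) = 0 := by noncomm_ring [hJp]
  simp only [add_mul, mul_add, smul_mul_smul_comm, h1p, h1pp, hp1p, h1pJ, hJ1p, hp, hpJ, hJp, hJ2,
    smul_zero, add_zero, zero_add, smul_neg, smul_smul]
  module

def psiAlgHom (p J : Matrix (Fin N) (Fin N) ℝ) (hp : p * p = p) (hpJ : p * J = J)
    (hJp : J * p = J) (hJ2 : J * J = -p) : (ℝ × ℂ) →ₐ[ℝ] Matrix (Fin N) (Fin N) ℝ :=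
  AlgHom.ofLinearMap ((psi_linear p J).mk' _)
    (by simp [psi, IsLinearMap.mk'_apply]) (psi_mul p J hp hpJ hJp hJ2)

lemma exp_rot (p J : Matrix (Fin N) (Fin N) ℝ) (hp : p * p = p) (hpJ : p * J = J)
    (hJp : J * p = J) (hJ2 : J * J = -p) (t : ℝ) :
    exp (t • J) = 1 - p + Real.cos t • p + Real.sin t • J := by
  have hcont : Continuous (psiAlgHom p J hp hpJ hJp hJ2) :=
    LinearMap.continuous_of_finiteDimensional
      (psiAlgHom p J hp hpJ hJp hJ2).toLinearMap
  have h0 : (t • J) = psiAlgHom p J hp hpJ hJp hJ2 (0, t * Complex.I) := by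
    show t • J = psi p J (0, t * Complex.I); simp [psi]
  rw [h0, show exp (psiAlgHom p J hp hpJ hJp hJ2 ((0:ℝ), (t:ℂ) * Complex.I))
      = psiAlgHom p J hp hpJ hJp hJ2 (exp ((0:ℝ), (t:ℂ) * Complex.I)) from (map_exp _ hcont _).symm]
  have he : exp ((0 : ℝ), t * Complex.I) = (1, Complex.exp (t * Complex.I)) := by
    have h1 : (exp ((0:ℝ), t * Complex.I)).1 = exp (0:ℝ) := Prod.fst_exp _
    have h2 : (exp ((0:ℝ), t * Complex.I)).2 = exp (t * Complex.I) := Prod.snd_exp _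
    have : exp (t * Complex.I) = Complex.exp (t * Complex.I) := by
      rw [Complex.exp_eq_exp_ℂ]
    ext
    · rw [h1, exp_zero]
    · rw [h2, this]
  rw [he]
  show psi p J (1, Complex.exp (↑t * Complex.I)) = _
  simp [psiAlgHom, AlgHom.ofLinearMap, psi, IsLinearMap.mk'_apply,
    Complex.exp_ofReal_mul_I_re, Complex.exp_ofReal_mul_I_im]

lemma exp_sum_rot (F : Finset ι) (p J : ι → Matrix (Fin N) (Fin N) ℝ) (t : ι → ℝ)
    (hp : ∀ i ∈ F, p i * p i = p i) (hpJ : ∀ i ∈ F, p i * J i = J i)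
    (hJp : ∀ i ∈ F, J i * p i = J i) (hJ2 : ∀ i ∈ F, J i * J i = -(p i))
    (hdisj : ∀ i ∈ F, ∀ j ∈ F, i ≠ j → p i * p j = 0) :
    exp (∑ i ∈ F, t i • J i) =
      1 - (∑ i ∈ F, p i) + ∑ i ∈ F, (Real.cos (t i) • p i + Real.sin (t i) • J i) := by
  classical
  induction F using Finset.induction_on with
  | empty => simp
  | @insert a F ha IH =>
    have haF : a ∈ insert a F := Finset.mem_insert_self a F
    have hmem : ∀ i ∈ F, i ∈ insert a F := fun i hi => Finset.mem_insert_of_mem hi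
    -- cross annihilation facts
    have hpJd : ∀ i ∈ F, p a * J i = 0 := fun i hi => by
      have := hdisj a haF i (hmem i hi) (fun h => ha (h ▸ hi))
      rw [← hpJ i (hmem i hi), ← mul_assoc, this, zero_mul]
    have hJpd : ∀ i ∈ F, J a * p i = 0 := fun i hi => by
      have := hdisj a haF i (hmem i hi) (fun h => ha (h ▸ hi))
      rw [← hJp a haF, mul_assoc, this, mul_zero]
    have hJJd : ∀ i ∈ F, J a * J i = 0 := fun i hi => by
      rw [← hpJ i (hmem i hi), ← mul_assoc, hJpd i hi, zero_mul]
    have hJJd' : ∀ i ∈ F, J i * J a = 0 := fun i hi => by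
      have h1 : p i * p a = 0 := hdisj i (hmem i hi) a haF (fun h => ha (h ▸ hi))
      rw [← hJp i (hmem i hi), ← hpJ a haF, mul_assoc, ← mul_assoc (p i), h1, zero_mul, mul_zero]
    have hpdc : ∀ i ∈ F, p a * p i = 0 := fun i hi =>
      hdisj a haF i (hmem i hi) (fun h => ha (h ▸ hi))
    have hpdc' : ∀ i ∈ F, p i * p a = 0 := fun i hi =>
      hdisj i (hmem i hi) a haF (fun h => ha (h ▸ hi))
    have hpJd' : ∀ i ∈ F, p i * J a = 0 := fun i hi => by
      rw [← hpJ a haF, ← mul_assoc, hpdc' i hi, zero_mul]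
    have hJpd' : ∀ i ∈ F, J i * p a = 0 := fun i hi => by
      rw [← hJp i (hmem i hi), mul_assoc, hpdc' i hi, mul_zero]
    rw [Finset.sum_insert ha]
    have hcomm : Commute (t a • J a) (∑ i ∈ F, t i • J i) := by
      unfold Commute SemiconjBy
      rw [Finset.mul_sum, Finset.sum_mul]
      apply Finset.sum_congr rfl
      intro i hi
      rw [smul_mul_smul_comm, smul_mul_smul_comm, hJJd i hi, hJJd' i hi, smul_zero, smul_zero]
    rw [Matrix.exp_add_of_commute _ _ hcomm,
      IH (fun i hi => hp i (hmem i hi)) (fun i hi => hpJ i (hmem i hi))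
        (fun i hi => hJp i (hmem i hi)) (fun i hi => hJ2 i (hmem i hi))
        (fun i hi j hj hij => hdisj i (hmem i hi) j (hmem j hj) hij),
      exp_rot (p a) (J a) (hp a haF) (hpJ a haF) (hJp a haF) (hJ2 a haF),
      Finset.sum_insert ha, Finset.sum_insert ha]
    have hPa : p a * (∑ i ∈ F, p i) = 0 := by
      rw [Finset.mul_sum]; exact Finset.sum_eq_zero hpdc
    have hCa : p a * (∑ i ∈ F, (Real.cos (t i) • p i + Real.sin (t i) • J i)) = 0 := by
      rw [Finset.mul_sum]; apply Finset.sum_eq_zero; intro i hi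
      rw [mul_add, mul_smul_comm, mul_smul_comm, hpdc i hi, hpJd i hi, smul_zero, smul_zero,
        add_zero]
    have hEa : ∀ X : Matrix (Fin N) (Fin N) ℝ,
        p a * X = 0 → J a * X = 0 →
        (Real.cos (t a) • p a + Real.sin (t a) • J a) * X = 0 := by
      intro X h1 h2
      rw [add_mul, smul_mul_assoc, smul_mul_assoc, h1, h2, smul_zero, smul_zero, add_zero]
    have hJPa : J a * (∑ i ∈ F, p i) = 0 := by
      rw [Finset.mul_sum]; exact Finset.sum_eq_zero hJpd
    have hJCa : J a * (∑ i ∈ F, (Real.cos (t i) • p i + Real.sin (t i) • J i)) = 0 := by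
      rw [Finset.mul_sum]; apply Finset.sum_eq_zero; intro i hi
      rw [mul_add, mul_smul_comm, mul_smul_comm, hJpd i hi, hJJd i hi, smul_zero, smul_zero,
        add_zero]
    set Ea := Real.cos (t a) • p a + Real.sin (t a) • J a with hEadef
    set P := ∑ i ∈ F, p i
    set C := ∑ i ∈ F, (Real.cos (t i) • p i + Real.sin (t i) • J i)
    have expand : (1 - p a + Ea) * (1 - P + C) =
        1 - (p a + P) + (Ea + C) := by
      have e1 : Ea * P = 0 := hEa P hPa hJPa
      have e2 : Ea * C = 0 := hEa C hCa hJCa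
      simp only [add_mul, sub_mul, mul_add, mul_sub, one_mul, mul_one, hPa, hCa, e1, e2]
      abel
    rw [add_assoc (1 - p a), ← hEadef, expand]

private def pr (x : ℕ) : ℕ := if Even x then x + 1 else x - 1
private def sg (x : ℕ) : ℝ := if Even x then 1 else -1

private lemma odd_facts {x : ℕ} (h : Odd x) : ¬ Even x ∧ Even (x - 1) ∧ x - 1 + 1 = x := by
  obtain ⟨c, rfl⟩ := h
  refine ⟨by simp [Nat.even_add_one], by simp, by omega⟩

private lemma pr_pr (x : ℕ) : pr (pr x) = x := by
  rcases Nat.even_or_odd x with h | h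
  · have h1 : ¬ Even (x + 1) := by simp [Nat.even_add_one, h]
    simp [pr, h, h1]
  · obtain ⟨h0, h1, h2⟩ := odd_facts h
    simp [pr, h0, h1, h2]

private lemma sg_pr (x : ℕ) : sg (pr x) = - sg x := by
  rcases Nat.even_or_odd x with h | h
  · have h1 : ¬ Even (x + 1) := by simp [Nat.even_add_one, h]
    simp [sg, pr, h, h1]
  · obtain ⟨h0, h1, _⟩ := odd_facts h
    simp [sg, pr, h0, h1]

private lemma sg_mul_sg_pr (x : ℕ) : sg x * sg (pr x) = -1 := by
  rw [sg_pr]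
  unfold sg
  by_cases h : Even x <;> simp [h]

private lemma pr_lt {k x : ℕ} (hk : Even k) (hx : x < k) : pr x < k := by
  unfold pr
  by_cases h : Even x
  · rw [if_pos h]
    rcases Nat.lt_or_ge (x + 1) k with h' | h'
    · exact h'
    · exfalso
      have hxk : x + 1 = k := le_antisymm hx h'
      rw [← hxk] at hk
      simp [Nat.even_add_one, h] at hk
  · rw [if_neg h]; omega

lemma exists_skew_sqrt_neg_proj {N : ℕ} (s : Finset (Fin N)) (hk : Even s.card) :
    ∃ K : Matrix (Fin N) (Fin N) ℝ,
      Kᵀ = -K ∧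
      (diagonal fun i => if i ∈ s then (1:ℝ) else 0) * K = K ∧
      K * (diagonal fun i => if i ∈ s then (1:ℝ) else 0) = K ∧
      K * K = -(diagonal fun i => if i ∈ s then (1:ℝ) else 0) := by
  classical
  set e' : Fin N → ℕ := fun a => if h : a ∈ s then ((s.equivFin ⟨a, h⟩ : Fin s.card) : ℕ)
    else s.card with he'
  have he'lt : ∀ a ∈ s, e' a < s.card := by
    intro a ha; simp only [he', dif_pos ha]; exact (s.equivFin ⟨a, ha⟩).2
  have he'inj : ∀ a ∈ s, ∀ b ∈ s, e' a = e' b → a = b := by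
    intro a ha b hb h
    simp only [he', dif_pos ha, dif_pos hb] at h
    have := s.equivFin.injective (Fin.ext h)
    exact congrArg Subtype.val this
  have he'surj : ∀ y < s.card, ∃ a ∈ s, e' a = y := by
    intro y hy
    refine ⟨(s.equivFin.symm ⟨y, hy⟩ : s), (s.equivFin.symm ⟨y, hy⟩).2, ?_⟩
    simp only [he', dif_pos (s.equivFin.symm ⟨y, hy⟩).2]
    have : (⟨(s.equivFin.symm ⟨y, hy⟩ : s), (s.equivFin.symm ⟨y, hy⟩).2⟩ : s)
        = s.equivFin.symm ⟨y, hy⟩ := Subtype.ext rfl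
    rw [this, Equiv.apply_symm_apply]
  set K : Matrix (Fin N) (Fin N) ℝ := fun a b =>
    if a ∈ s ∧ b ∈ s ∧ e' b = pr (e' a) then sg (e' a) else 0 with hKdef
  have hsupp : ∀ a b, K a b ≠ 0 → a ∈ s ∧ b ∈ s := by
    intro a b h
    by_contra hc
    apply h
    simp only [hKdef]
    rw [if_neg]
    intro ⟨h1, h2, _⟩; exact hc ⟨h1, h2⟩
  refine ⟨K, ?_, ?_, ?_, ?_⟩
  · ext a b
    simp only [transpose_apply, Matrix.neg_apply]
    simp only [hKdef]
    by_cases ha : a ∈ s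
    · by_cases hb : b ∈ s
      · by_cases hxy : e' b = pr (e' a)
        · rw [if_pos ⟨hb, ha, by rw [hxy, pr_pr]⟩, if_pos ⟨ha, hb, hxy⟩, hxy, sg_pr]
        · rw [if_neg, if_neg, neg_zero]
          · intro ⟨_, _, h3⟩; exact hxy h3
          · intro ⟨_, _, h3⟩; exact hxy (by rw [h3, pr_pr])
      · rw [if_neg (fun h => hb h.1), if_neg (fun h => hb h.2.1), neg_zero]
    · rw [if_neg (fun h => ha h.2.1), if_neg (fun h => ha h.1), neg_zero]
  · ext a b
    rw [diagonal_mul]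
    by_cases ha : a ∈ s
    · rw [if_pos ha, one_mul]
    · rw [if_neg ha, zero_mul]
      by_cases hab : K a b = 0
      · exact hab.symm
      · exact absurd (hsupp a b hab).1 ha
  · ext a b
    rw [mul_diagonal]
    by_cases hb : b ∈ s
    · rw [if_pos hb, mul_one]
    · rw [if_neg hb, mul_zero]
      by_cases hab : K a b = 0
      · exact hab.symm
      · exact absurd (hsupp a b hab).2 hb
  · ext a b
    rw [Matrix.mul_apply, Matrix.neg_apply, Matrix.diagonal_apply]
    by_cases ha : a ∈ s
    · obtain ⟨c0, hc0s, hc0e⟩ := he'surj (pr (e' a)) (pr_lt hk (he'lt a ha))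
      rw [Finset.sum_eq_single c0]
      · have hKac0 : K a c0 = sg (e' a) := by
          simp only [hKdef]; rw [if_pos ⟨ha, hc0s, hc0e⟩]
        rw [hKac0]
        simp only [hKdef]
        by_cases hb : b ∈ s
        · by_cases hba : b = a
          · subst hba
            rw [if_pos ⟨hc0s, hb, by rw [hc0e, pr_pr]⟩, if_pos rfl, hc0e, sg_mul_sg_pr]
            simp [hb]
          · rw [if_neg, if_neg (fun h => hba h.symm), mul_zero, neg_zero]
            intro ⟨_, _, h3⟩
            rw [hc0e, pr_pr] at h3
            exact hba (he'inj b hb a ha h3)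
        · rw [if_neg (fun h => hb h.2.1), mul_zero,
            if_neg (fun h : a = b => hb (h ▸ ha)), neg_zero]
      · intro c _ hc
        by_cases hcs : c ∈ s
        · have : K a c = 0 := by
            simp only [hKdef]
            rw [if_neg]
            intro ⟨_, _, h3⟩
            exact hc (he'inj c hcs c0 hc0s (by rw [h3, hc0e]))
          rw [this, zero_mul]
        · have : K a c = 0 := by
            by_contra hcon; exact hcs (hsupp a c hcon).2
          rw [this, zero_mul]
      · intro h; exact absurd (Finset.mem_univ _) h
    · have h0 : ∀ c, K a c = 0 := by
        intro c; by_contra hc; exact ha (hsupp a c hc).1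
      simp only [h0, zero_mul, Finset.sum_const_zero]
      by_cases hab : a = b
      · rw [if_pos hab, if_neg ha, neg_zero]
      · rw [if_neg hab, neg_zero]

lemma det_exp_pos {N : ℕ} (W : Matrix (Fin N) (Fin N) ℝ) : 0 < (exp W).det := by
  have h2 : exp W = exp ((1/2:ℝ) • W) * exp ((1/2:ℝ) • W) := by
    rw [← Matrix.exp_add_of_commute _ _ (Commute.refl _), ← add_smul]
    norm_num
  have hu : IsUnit (exp ((1/2:ℝ) • W)).det :=
    (Matrix.isUnit_iff_isUnit_det _).mp (Matrix.isUnit_exp _)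
  rw [h2, det_mul]
  exact mul_self_pos.mpr hu.ne_zero

set_option maxHeartbeats 2000000 in
lemma main_construction {N : ℕ} (Q : Matrix (Fin N) (Fin N) ℝ) (d : Fin N → ℝ)
    (hQ : Qᵀ * Q = 1) (hdet : Q.det = 1) (hD : Q + Qᵀ = diagonal d) :
    ∃ W : Matrix (Fin N) (Fin N) ℝ, Wᵀ = -W ∧ exp W = Q ∧
      ∃ h : Fin N → ℝ, W * W = -diagonal h ∧ ∀ i, 0 ≤ h i ∧ h i ≤ Real.pi ^ 2 := by
  classical
  have hQ' : Q * Qᵀ = 1 := mul_eq_one_comm.mp hQ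
  have hQT : Qᵀ = diagonal d - Q := eq_sub_of_add_eq' hD
  -- diagonal entries bound
  have hdbound : ∀ i, (d i)^2 ≤ 4 := by
    intro i
    have h1 : (Q * Qᵀ) i i = 1 := by rw [hQ', one_apply_eq]
    rw [mul_apply] at h1
    have h2 : Q i i * Qᵀ i i ≤ ∑ j, Q i j * Qᵀ j i := by
      apply Finset.single_le_sum (f := fun j => Q i j * Qᵀ j i)
      · intro j _
        rw [transpose_apply]
        exact mul_self_nonneg _
      · exact Finset.mem_univ i
    rw [h1, transpose_apply] at h2
    have h3 : Q i i + Qᵀ i i = d i := by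
      have := congrFun (congrFun hD i) i
      simpa [Matrix.diagonal_apply_eq] using this
    rw [transpose_apply] at h3
    have h4 : d i = 2 * Q i i := by linarith
    rw [h4]
    nlinarith [h2]
  -- the skew part
  set A := Q - Qᵀ with hAdef
  have hAskew : Aᵀ = -A := by
    rw [hAdef, transpose_sub, transpose_transpose]
    abel
  have hA_eq : A = (2:ℝ) • Q - diagonal d := by
    rw [hAdef, hQT]
    module
  have hQD : Q * diagonal d = diagonal d * Q := by
    have h1 : Q * (Q + Qᵀ) = Q * Q + 1 := by rw [mul_add, hQ']
    have h2 : (Q + Qᵀ) * Q = Q * Q + 1 := by rw [add_mul, hQ]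
    rw [← hD, h1, h2]
  have hQ2 : Q * Q = Q * diagonal d - 1 := by
    have h1 : Q * (Q + Qᵀ) = Q * Q + 1 := by rw [mul_add, hQ']
    rw [← hD, h1]
    abel
  have hAD : A * diagonal d = diagonal d * A := by
    rw [hA_eq, sub_mul, mul_sub, smul_mul_assoc, mul_smul_comm, hQD]
  have hA2 : A * A = diagonal d * diagonal d - (4:ℝ) • 1 := by
    have h2 : A * A = Q * Q + Qᵀ * Qᵀ - (2:ℝ) • 1 := by
      rw [hAdef, sub_mul, mul_sub, mul_sub, hQ, hQ']
      module
    have hsq : (Q + Qᵀ) * (Q + Qᵀ) = diagonal d * diagonal d := by rw [hD]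
    rw [add_mul, mul_add, mul_add, hQ, hQ'] at hsq
    have h1 : Q * Q + Qᵀ * Qᵀ = diagonal d * diagonal d - (2:ℝ) • 1 := by
      rw [eq_sub_iff_add_eq, ← hsq]
      module
    rw [h2, h1]
    module
  have hA_entry : ∀ i j, d i ≠ d j → A i j = 0 := by
    intro i j hij
    have h := hAD
    rw [← Matrix.ext_iff] at h
    have h1 := h i j
    rw [mul_diagonal, diagonal_mul] at h1
    have h2 : A i j * (d j - d i) = 0 := by linear_combination h1
    rcases mul_eq_zero.mp h2 with h3 | h3
    · exact h3
    · exact absurd (by linarith : d i = d j) hij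
  -- projections and rotation generators
  set ind : ℝ → Fin N → ℝ := fun v i => if d i = v then 1 else 0 with hinddef
  set pv : ℝ → Matrix (Fin N) (Fin N) ℝ := fun v => diagonal (ind v) with hpvdef
  set th : ℝ → ℝ := fun v => Real.arccos (v / 2) with hthdef
  set Jv : ℝ → Matrix (Fin N) (Fin N) ℝ :=
    fun v => (2 * Real.sin (th v))⁻¹ • (A * pv v) with hJvdef
  have hpvv : ∀ v, pv v * pv v = pv v := by
    intro v
    simp only [hpvdef]
    rw [diagonal_mul_diagonal]
    apply congrArg diagonal
    funext i
    by_cases h : d i = v <;> simp [hinddef, h]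
  have hdisj : ∀ v w, v ≠ w → pv v * pv w = 0 := by
    intro v w hvw
    simp only [hpvdef]
    rw [diagonal_mul_diagonal]
    have : (fun i => ind v i * ind w i) = fun _ => (0:ℝ) := by
      funext i
      by_cases h : d i = v <;> simp [hinddef, h, hvw]
    rw [this, diagonal_zero]
  have hApv : ∀ v, A * pv v = pv v * A := by
    intro v
    ext i j
    simp only [hpvdef]
    rw [mul_diagonal, diagonal_mul]
    by_cases hi : d i = v <;> by_cases hj : d j = v
    · simp [hinddef, hi, hj]
    · have : A i j = 0 := hA_entry i j (by rw [hi]; exact fun hc => hj hc.symm)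
      simp [hinddef, hi, hj, this]
    · have : A i j = 0 := hA_entry i j (by rw [hj]; exact hi)
      simp [hinddef, hi, hj, this]
    · simp [hinddef, hi, hj]
  have hDpv : ∀ v, diagonal d * pv v = v • pv v := by
    intro v
    simp only [hpvdef]
    rw [diagonal_mul_diagonal]
    ext i j
    by_cases hij : i = j
    · subst hij
      rw [Matrix.diagonal_apply_eq, Matrix.smul_apply, Matrix.diagonal_apply_eq, smul_eq_mul]
      by_cases h : d i = v <;> simp [hinddef, h]
    · rw [Matrix.diagonal_apply_ne _ hij, Matrix.smul_apply, Matrix.diagonal_apply_ne _ hij, smul_zero]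
  have hApv2 : ∀ v, (A * pv v) * (A * pv v) = ((v:ℝ)^2 - 4) • pv v := by
    intro v
    have h1 : (A * pv v) * (A * pv v) = (A * A) * (pv v * pv v) := by
      rw [mul_assoc, ← mul_assoc (pv v), ← hApv, mul_assoc, ← mul_assoc]
    rw [h1, hpvv, hA2, sub_mul, smul_mul_assoc, one_mul, mul_assoc, hDpv, mul_smul_comm,
      hDpv, smul_smul, sub_smul]
    congr 1
    ring_nf
  -- the middle-value set
  set V : Finset ℝ := (Finset.image d Finset.univ).filter (fun v => v ≠ 2 ∧ v ≠ -2) with hVdef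
  have hVfacts : ∀ v ∈ V, -2 < v ∧ v < 2 := by
    intro v hv
    rw [hVdef, Finset.mem_filter, Finset.mem_image] at hv
    obtain ⟨⟨i, _, hi⟩, hv2, hvm2⟩ := hv
    have := hdbound i
    rw [hi] at this
    constructor
    · rcases lt_or_eq_of_le (by nlinarith : -2 ≤ v) with h | h
      · exact h
      · exact absurd h.symm hvm2
    · rcases lt_or_eq_of_le (by nlinarith : v ≤ 2) with h | h
      · exact h
      · exact absurd h hv2
  have hcosv : ∀ v ∈ V, Real.cos (th v) = v / 2 := by
    intro v hv
    obtain ⟨h1, h2⟩ := hVfacts v hv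
    rw [hthdef]
    exact Real.cos_arccos (by linarith) (by linarith)
  have hsinpos : ∀ v ∈ V, 0 < Real.sin (th v) := by
    intro v hv
    obtain ⟨h1, h2⟩ := hVfacts v hv
    apply Real.sin_pos_of_pos_of_lt_pi
    · rw [hthdef]
      apply Real.arccos_pos.mpr
      linarith
    · rw [hthdef]
      apply lt_of_le_of_ne (Real.arccos_le_pi _)
      intro hc
      have := Real.cos_arccos (by linarith : -1 ≤ v/2) (by linarith : v/2 ≤ 1)
      rw [hc, Real.cos_pi] at this
      linarith
  have hsinsq : ∀ v ∈ V, (2 * Real.sin (th v))^2 = 4 - v^2 := by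
    intro v hv
    have h1 : Real.sin (th v) ^ 2 = 1 - Real.cos (th v) ^ 2 := Real.sin_sq (th v)
    rw [hcosv v hv] at h1
    nlinarith [h1]
  have hJv2 : ∀ v ∈ V, Jv v * Jv v = -(pv v) := by
    intro v hv
    simp only [hJvdef]
    rw [smul_mul_assoc, mul_smul_comm, smul_smul, hApv2]
    rw [smul_smul]
    have hne : (2 * Real.sin (th v)) ≠ 0 := by
      have := hsinpos v hv; positivity
    have : (2 * Real.sin (th v))⁻¹ * (2 * Real.sin (th v))⁻¹ * (v ^ 2 - 4) = -1 := by
      have h4 := hsinsq v hv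
      rw [show (v:ℝ) ^ 2 - 4 = -(2 * Real.sin (th v)) ^ 2 by linarith [h4]]
      field_simp
      rw [div_self (hsinpos v hv).ne']
    rw [this, neg_one_smul]
  have hpvJv : ∀ v, pv v * Jv v = Jv v := by
    intro v
    simp only [hJvdef]
    rw [mul_smul_comm, ← mul_assoc, ← hApv, mul_assoc, hpvv]
  have hJvpv : ∀ v, Jv v * pv v = Jv v := by
    intro v
    simp only [hJvdef]
    rw [smul_mul_assoc, mul_assoc, hpvv]
  have hQpv : ∀ v ∈ V, Real.cos (th v) • pv v + Real.sin (th v) • Jv v = Q * pv v := by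
    intro v hv
    have hQsplit : Q = (1/2:ℝ) • A + (1/2:ℝ) • diagonal d := by
      rw [hA_eq]; module
    have hsin : Real.sin (th v) • Jv v = (1/2:ℝ) • (A * pv v) := by
      simp only [hJvdef]
      rw [smul_smul]
      congr 1
      have hne : Real.sin (th v) ≠ 0 := (hsinpos v hv).ne'
      field_simp
    rw [hsin, hcosv v hv]
    conv_rhs => rw [hQsplit]
    rw [add_mul, smul_mul_assoc, smul_mul_assoc, hDpv, smul_smul]
    module
  -- exp of the middle part
  set P : Matrix (Fin N) (Fin N) ℝ := ∑ v ∈ V, pv v with hPdef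
  set W0 : Matrix (Fin N) (Fin N) ℝ := ∑ v ∈ V, th v • Jv v with hW0def
  have hexpW0 : exp W0 = 1 - P + Q * P := by
    rw [hW0def, exp_sum_rot V pv Jv th (fun v _ => hpvv v) (fun v _ => hpvJv v)
      (fun v _ => hJvpv v) (fun v hv => hJv2 v hv) (fun v _ w _ hvw => hdisj v w hvw)]
    congr 1
    rw [Finset.mul_sum]
    apply Finset.sum_congr rfl
    intro v hv
    exact hQpv v hv
  -- partition of unity
  set p2 : Matrix (Fin N) (Fin N) ℝ := pv 2 with hp2def
  set pm : Matrix (Fin N) (Fin N) ℝ := pv (-2) with hpmdef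
  have hpart : P = 1 - p2 - pm := by
    ext i j
    rw [hPdef, hp2def, hpmdef, Matrix.sum_apply, Matrix.sub_apply, Matrix.sub_apply]
    by_cases hij : i = j
    · subst hij
      have hterm : ∀ v, pv v i i = if d i = v then (1:ℝ) else 0 := by
        intro v
        simp only [hpvdef]
        rw [Matrix.diagonal_apply_eq]
      simp only [hterm]
      rw [Finset.sum_ite_eq V (d i) (fun _ => (1:ℝ)), one_apply_eq]
      by_cases h2 : d i = 2
      · have hnot : d i ∉ V := by rw [hVdef]; simp [h2]
        rw [if_neg hnot, if_pos h2, if_neg (by rw [h2]; norm_num)]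
        norm_num
      · by_cases hm : d i = -2
        · have hnot : d i ∉ V := by rw [hVdef]; simp [hm]
          rw [if_neg hnot, if_neg h2, if_pos hm]
          norm_num
        · have hin : d i ∈ V := by
            rw [hVdef, Finset.mem_filter, Finset.mem_image]
            exact ⟨⟨i, Finset.mem_univ i, rfl⟩, h2, hm⟩
          rw [if_pos hin, if_neg h2, if_neg hm]
          norm_num
    · have hterm : ∀ v, pv v i j = 0 := by
        intro v
        simp only [hpvdef]
        exact Matrix.diagonal_apply_ne _ hij
      simp only [hterm]
      rw [Finset.sum_const_zero, one_apply_ne hij]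
      norm_num
  have hp2T : p2ᵀ = p2 := by rw [hp2def, hpvdef]; simp only; exact diagonal_transpose _
  have hpmT : pmᵀ = pm := by rw [hpmdef, hpvdef]; simp only; exact diagonal_transpose _
  -- Q acts as 1 on the (+2)-class and as -1 on the (-2)-class
  have hQp2 : Q * p2 = p2 := by
    have hmul : (Qᵀ - 1) * (Q - 1) = (2:ℝ) • 1 - diagonal d := by
      have hexp : (Qᵀ - 1) * (Q - 1) = Qᵀ * Q - Qᵀ - Q + 1 := by noncomm_ring
      rw [hexp, hQ, ← hD]
      module
    have hzero : ((2:ℝ) • 1 - diagonal d) * p2 = 0 := by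
      rw [sub_mul, smul_mul_assoc, one_mul, hp2def, hDpv 2, sub_self]
    have hX : ((Q - 1) * p2)ᵀ * ((Q - 1) * p2) = 0 := by
      rw [transpose_mul, transpose_sub, transpose_one, hp2T]
      calc p2 * (Qᵀ - 1) * ((Q - 1) * p2)
          = p2 * (((Qᵀ - 1) * (Q - 1)) * p2) := by rw [mul_assoc, mul_assoc]
        _ = p2 * 0 := by rw [hmul, hzero]
        _ = 0 := mul_zero _
    have hX0 : (Q - 1) * p2 = 0 := by
      have h' : ((Q - 1) * p2)ᴴ * ((Q - 1) * p2) = 0 := by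
        rwa [conjTranspose_eq_transpose_of_trivial]
      exact Matrix.conjTranspose_mul_self_eq_zero.mp h'
    rw [sub_mul, one_mul, sub_eq_zero] at hX0
    exact hX0
  have hQpm : Q * pm = -pm := by
    have hmul : (Qᵀ + 1) * (Q + 1) = (2:ℝ) • 1 + diagonal d := by
      have hexp : (Qᵀ + 1) * (Q + 1) = Qᵀ * Q + Qᵀ + Q + 1 := by noncomm_ring
      rw [hexp, hQ, ← hD]
      module
    have hzero : ((2:ℝ) • 1 + diagonal d) * pm = 0 := by
      rw [add_mul, smul_mul_assoc, one_mul, hpmdef, hDpv (-2)]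
      module
    have hX : ((Q + 1) * pm)ᵀ * ((Q + 1) * pm) = 0 := by
      rw [transpose_mul, transpose_add, transpose_one, hpmT]
      calc pm * (Qᵀ + 1) * ((Q + 1) * pm)
          = pm * (((Qᵀ + 1) * (Q + 1)) * pm) := by rw [mul_assoc, mul_assoc]
        _ = pm * 0 := by rw [hmul, hzero]
        _ = 0 := mul_zero _
    have hX0 : (Q + 1) * pm = 0 := by
      have h' : ((Q + 1) * pm)ᴴ * ((Q + 1) * pm) = 0 := by
        rwa [conjTranspose_eq_transpose_of_trivial]
      exact Matrix.conjTranspose_mul_self_eq_zero.mp h'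
    rw [add_mul, one_mul, add_eq_zero_iff_eq_neg] at hX0
    exact hX0
  -- evenness of the (-2)-class
  set s : Finset (Fin N) := Finset.univ.filter (fun i => d i = -2) with hsdef
  have hpm_ind : pm = diagonal (fun i => if i ∈ s then (1:ℝ) else 0) := by
    rw [hpmdef, hpvdef]
    congr 1
    funext i
    rw [hsdef]
    simp [hinddef, Finset.mem_filter]
  have hXdiag : (1 : Matrix (Fin N) (Fin N) ℝ) - (2:ℝ) • pm
      = diagonal (fun i => if d i = -2 then (-1:ℝ) else 1) := by
    have hpm_diag : pm = diagonal (ind (-2)) := by rw [hpmdef, hpvdef]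
    rw [hpm_diag]
    ext i j
    by_cases hij : i = j
    · subst hij
      rw [Matrix.sub_apply, Matrix.smul_apply, one_apply_eq, Matrix.diagonal_apply_eq, Matrix.diagonal_apply_eq]
      by_cases hm : d i = -2 <;> simp [hinddef, hm] <;> norm_num
    · rw [Matrix.sub_apply, Matrix.smul_apply, one_apply_ne hij, Matrix.diagonal_apply_ne _ hij,
        Matrix.diagonal_apply_ne _ hij]
      simp
  have hdetX : ((1 : Matrix (Fin N) (Fin N) ℝ) - (2:ℝ) • pm).det = (-1:ℝ)^s.card := by
    rw [hXdiag, det_diagonal, Finset.prod_ite, Finset.prod_const, Finset.prod_const, one_pow,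
      mul_one]
  have hPpm : P * pm = 0 := by
    rw [hPdef, Finset.sum_mul]
    apply Finset.sum_eq_zero
    intro v hv
    rw [hpmdef]
    exact hdisj v (-2) (hVfacts v hv).1.ne'
  have hYpm : (1 - P + Q * P) * pm = pm := by
    rw [add_mul, sub_mul, one_mul, hPpm, mul_assoc, hPpm, mul_zero, sub_zero, add_zero]
  have hfact : exp W0 * (1 - (2:ℝ) • pm) = Q := by
    rw [hexpW0, mul_sub, mul_one, mul_smul_comm, hYpm, hpart, mul_sub, mul_sub, mul_one,
      hQp2, hQpm]
    module
  have hk : Even s.card := by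
    have h1 : (exp W0).det * ((1 : Matrix (Fin N) (Fin N) ℝ) - (2:ℝ) • pm).det = 1 := by
      rw [← det_mul, hfact, hdet]
    rw [hdetX] at h1
    rcases Nat.even_or_odd s.card with h | h
    · exact h
    · exfalso
      rw [h.neg_one_pow] at h1
      have := det_exp_pos W0
      nlinarith
  obtain ⟨K, hKskew, hpmK, hKpm, hKK⟩ := exists_skew_sqrt_neg_proj s hk
  rw [← hpm_ind] at hpmK hKpm hKK
  -- the full generator
  have hm2V : (-2:ℝ) ∉ V := by rw [hVdef]; simp
  set F' : Finset ℝ := insert (-2:ℝ) V with hF'def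
  set J' : ℝ → Matrix (Fin N) (Fin N) ℝ := fun v => if v = -2 then K else Jv v with hJ'def
  set W : Matrix (Fin N) (Fin N) ℝ := ∑ v ∈ F', th v • J' v with hWdef
  have hthm2 : th (-2) = Real.pi := by
    simp only [hthdef]
    norm_num [Real.arccos_neg_one]
  have hJ'm2 : J' (-2) = K := by rw [hJ'def]; simp
  have hJ'mid : ∀ v ∈ V, J' v = Jv v := by
    intro v hv
    rw [hJ'def]
    simp only
    rw [if_neg (hVfacts v hv).1.ne']
  have hmemF' : ∀ v ∈ F', v = -2 ∨ v ∈ V := by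
    intro v hv
    rw [hF'def, Finset.mem_insert] at hv
    exact hv
  have hpJ' : ∀ v ∈ F', pv v * J' v = J' v := by
    intro v hv
    rcases hmemF' v hv with rfl | hv'
    · rw [hJ'm2, ← hpmdef]; exact hpmK
    · rw [hJ'mid v hv']; exact hpvJv v
  have hJp' : ∀ v ∈ F', J' v * pv v = J' v := by
    intro v hv
    rcases hmemF' v hv with rfl | hv'
    · rw [hJ'm2, ← hpmdef]; exact hKpm
    · rw [hJ'mid v hv']; exact hJvpv v
  have hJ2' : ∀ v ∈ F', J' v * J' v = -(pv v) := by
    intro v hv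
    rcases hmemF' v hv with rfl | hv'
    · rw [hJ'm2, ← hpmdef]; exact hKK
    · rw [hJ'mid v hv']; exact hJv2 v hv'
  have hexpW : exp W = Q := by
    rw [hWdef, exp_sum_rot F' pv J' th (fun v _ => hpvv v) hpJ' hJp' hJ2'
      (fun v _ w _ hvw => hdisj v w hvw)]
    rw [hF'def, Finset.sum_insert hm2V, Finset.sum_insert hm2V]
    have hCm2 : Real.cos (th (-2)) • pv (-2) + Real.sin (th (-2)) • J' (-2) = Q * pm := by
      rw [hthm2, Real.cos_pi, Real.sin_pi, zero_smul, add_zero, neg_one_smul, ← hpmdef, hQpm]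
    have hCmid : ∑ v ∈ V, (Real.cos (th v) • pv v + Real.sin (th v) • J' v) = Q * P := by
      rw [hPdef, Finset.mul_sum]
      apply Finset.sum_congr rfl
      intro v hv
      rw [hJ'mid v hv]
      exact hQpv v hv
    rw [hCm2, hCmid, ← hpmdef, ← hPdef, hpart, mul_sub, mul_sub, mul_one, hQp2, hQpm]
    module
  have hJvskew : ∀ v, (Jv v)ᵀ = -(Jv v) := by
    intro v
    simp only [hJvdef]
    rw [transpose_smul, transpose_mul, hAskew]
    have hpvT : (pv v)ᵀ = pv v := by rw [hpvdef]; simp only; exact diagonal_transpose _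
    rw [hpvT, mul_neg, ← hApv, smul_neg]
  have hWskew : Wᵀ = -W := by
    rw [hWdef, transpose_sum, ← Finset.sum_neg_distrib]
    apply Finset.sum_congr rfl
    intro v hv
    rw [transpose_smul]
    rcases hmemF' v hv with rfl | hv'
    · rw [hJ'm2, hKskew, smul_neg]
    · rw [hJ'mid v hv', hJvskew v, smul_neg]
  set h : Fin N → ℝ := fun i => ∑ v ∈ F', (th v)^2 * ind v i with hhdef
  have hWW : W * W = -diagonal h := by
    rw [hWdef, Finset.sum_mul_sum]
    have hdiagstep : ∀ v ∈ F', ∑ w ∈ F', (th v • J' v) * (th w • J' w)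
        = (th v)^2 • (-(pv v)) := by
      intro v hv
      rw [Finset.sum_eq_single v]
      · rw [smul_mul_smul_comm, hJ2' v hv, ← sq]
      · intro w hw hwv
        rw [smul_mul_smul_comm, ← hJp' v hv, ← hpJ' w hw, mul_assoc, ← mul_assoc (pv v),
          hdisj v w (fun hc => hwv (hc ▸ rfl)), zero_mul, mul_zero, smul_zero]
      · intro hc
        exact absurd hv hc
    rw [Finset.sum_congr rfl hdiagstep]
    ext i j
    rw [Matrix.sum_apply, Matrix.neg_apply]
    by_cases hij : i = j
    · subst hij
      rw [Matrix.diagonal_apply_eq, hhdef]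
      simp only
      rw [← Finset.sum_neg_distrib]
      apply Finset.sum_congr rfl
      intro v hv
      rw [Matrix.smul_apply, Matrix.neg_apply, hpvdef]
      simp only
      rw [Matrix.diagonal_apply_eq, smul_eq_mul]
      ring
    · rw [Matrix.diagonal_apply_ne _ hij, neg_zero]
      apply Finset.sum_eq_zero
      intro v hv
      rw [Matrix.smul_apply, Matrix.neg_apply, hpvdef]
      simp only
      rw [Matrix.diagonal_apply_ne _ hij, neg_zero, smul_zero]
  have hhval : ∀ i, h i = if d i ∈ F' then (th (d i))^2 else 0 := by
    intro i
    simp only [hhdef]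
    have hterm : ∀ v, (th v)^2 * ind v i = if d i = v then (th v)^2 else 0 := by
      intro v
      simp only [hinddef]
      rw [mul_ite, mul_one, mul_zero]
    simp only [hterm]
    exact Finset.sum_ite_eq F' (d i) (fun v => (th v)^2)
  refine ⟨W, hWskew, hexpW, h, hWW, ?_⟩
  intro i
  rw [hhval i]
  by_cases hin : d i ∈ F'
  · rw [if_pos hin]
    constructor
    · positivity
    · have h1 : 0 ≤ th (d i) := by rw [hthdef]; exact Real.arccos_nonneg _
      have h2 : th (d i) ≤ Real.pi := by rw [hthdef]; exact Real.arccos_le_pi _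
      nlinarith
  · rw [if_neg hin]
    exact ⟨le_refl 0, by positivity⟩

lemma map_mul_ofReal {N : ℕ} (X Y : Matrix (Fin N) (Fin N) ℝ) :
    (X * Y).map Complex.ofReal = X.map Complex.ofReal * Y.map Complex.ofReal := by
  have hc : (Complex.ofReal : ℝ → ℂ) = ⇑Complex.ofRealHom := rfl
  rw [hc, Matrix.map_mul]

lemma map_one_ofReal {N : ℕ} :
    (1 : Matrix (Fin N) (Fin N) ℝ).map Complex.ofReal = 1 :=
  Matrix.map_one _ (by simp) (by simp)

lemma eigen_transfer {N : ℕ} (P W : Matrix (Fin N) (Fin N) ℝ)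
    (hP1 : P * Pᵀ = 1) (hP2 : Pᵀ * P = 1) {μ : ℂ}
    (h : IsEigenvalue (P * W * Pᵀ) μ) : IsEigenvalue W μ := by
  obtain ⟨v, hv0, hvec⟩ := h
  have hmap : (P * W * Pᵀ).map (Complex.ofReal)
      = P.map Complex.ofReal * W.map Complex.ofReal * Pᵀ.map Complex.ofReal := by
    rw [map_mul_ofReal, map_mul_ofReal]
  set Pc := P.map Complex.ofReal
  set PTc := Pᵀ.map Complex.ofReal
  set Wc := W.map Complex.ofReal
  have hPT1 : PTc * Pc = 1 := by
    rw [← map_mul_ofReal, hP2, map_one_ofReal]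
  have hPT2 : Pc * PTc = 1 := by
    rw [← map_mul_ofReal, hP1, map_one_ofReal]
  rw [hmap] at hvec
  refine ⟨PTc.mulVec v, ?_, ?_⟩
  · intro hc
    apply hv0
    have : Pc.mulVec (PTc.mulVec v) = Pc.mulVec 0 := by rw [hc]
    rw [mulVec_mulVec, hPT2, one_mulVec, mulVec_zero] at this
    exact this
  · have h1 : PTc.mulVec ((Pc * Wc * PTc).mulVec v) = PTc.mulVec (μ • v) := by rw [hvec]
    rw [mulVec_mulVec, mulVec_smul] at h1
    rw [mulVec_mulVec]
    calc (Wc * PTc).mulVec v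
        = ((PTc * Pc) * (Wc * PTc)).mulVec v := by rw [hPT1, one_mul]
      _ = (PTc * (Pc * Wc * PTc)).mulVec v := by rw [← mul_assoc, ← mul_assoc, mul_assoc PTc]
      _ = μ • PTc.mulVec v := h1
lemma eigen_of_sq_diag {N : ℕ} (W : Matrix (Fin N) (Fin N) ℝ) (h : Fin N → ℝ)
    (hWW : W * W = -diagonal h) (hb : ∀ i, 0 ≤ h i ∧ h i ≤ Real.pi ^ 2)
    {μ : ℂ} (hμ : IsEigenvalue W μ) (hμ0 : μ ≠ 0) :
    ∃ lam : ℝ, lam ∈ Set.Ioc (-Real.pi) Real.pi ∧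
      (μ = Complex.I * lam ∨ μ = -(Complex.I * lam)) := by
  obtain ⟨v, hv0, hvec⟩ := hμ
  set Wc := W.map Complex.ofReal with hWc
  have hsq : (Wc * Wc).mulVec v = (μ * μ) • v := by
    rw [← mulVec_mulVec, hvec, mulVec_smul, hvec, smul_smul]
  have hmap : Wc * Wc = -(diagonal fun i => (h i : ℂ)) := by
    rw [hWc, ← map_mul_ofReal, hWW]
    ext i j
    by_cases hij : i = j
    · subst hij
      simp [Matrix.diagonal_apply_eq]
    · simp [Matrix.diagonal_apply_ne _ hij]
  rw [hmap] at hsq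
  obtain ⟨i, hvi⟩ := Function.ne_iff.mp hv0
  have hent : -((h i : ℂ) * v i) = (μ * μ) * v i := by
    have := congrFun hsq i
    rwa [neg_mulVec, Pi.neg_apply, mulVec_diagonal, Pi.smul_apply, smul_eq_mul] at this
  have hμ2 : μ * μ = -(h i : ℂ) := by
    have hfac : ((μ * μ) + (h i : ℂ)) * v i = 0 := by linear_combination -hent
    rcases mul_eq_zero.mp hfac with hc | hc
    · linear_combination hc
    · exact absurd hc hvi
  have hipos : 0 < h i := by
    rcases lt_or_eq_of_le (hb i).1 with h' | h'
    · exact h'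
    · exfalso
      apply hμ0
      rw [← h', Complex.ofReal_zero, neg_zero, mul_self_eq_zero] at hμ2
      exact hμ2
  set lam := Real.sqrt (h i) with hlam
  have hlampos : 0 < lam := Real.sqrt_pos.mpr hipos
  have hlamle : lam ≤ Real.pi := by
    rw [hlam]
    calc Real.sqrt (h i) ≤ Real.sqrt (Real.pi ^ 2) := Real.sqrt_le_sqrt (hb i).2
      _ = Real.pi := by rw [Real.sqrt_sq Real.pi_pos.le]
  refine ⟨lam, ⟨by linarith [Real.pi_pos], hlamle⟩, ?_⟩
  have hlamsq : (lam : ℂ) * lam = (h i : ℂ) := by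
    rw [← Complex.ofReal_mul, hlam, Real.mul_self_sqrt (hb i).1]
  have hfac : (μ - Complex.I * lam) * (μ + Complex.I * lam) = 0 := by
    have hI : Complex.I * Complex.I = -1 := Complex.I_mul_I
    linear_combination hμ2 + hlamsq - ((lam:ℂ) * (lam:ℂ)) * hI
  rcases mul_eq_zero.mp hfac with hc | hc
  · left; linear_combination hc
  · right; linear_combination hc

/-- For any `R, R' ∈ SO(n)` there is a skew-symmetric `W` with `R' = R·exp(W)` all of whose
nonzero eigenvalues are of the form `±iλ` with `λ ∈ (-π, π]`. -/
theorem exists_log_with_small_eigenvalues (n : ℕ) (R R' : Matrix (Fin n) (Fin n) ℝ)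
    (hR : R ∈ SO n) (hR' : R' ∈ SO n) :
    ∃ W : Matrix (Fin n) (Fin n) ℝ, Wᵀ = -W ∧ R' = R * NormedSpace.exp W ∧
      ∀ μ : ℂ, IsEigenvalue W μ → μ ≠ 0 →
        ∃ lam : ℝ, lam ∈ Set.Ioc (-Real.pi) Real.pi ∧
          (μ = Complex.I * lam ∨ μ = -(Complex.I * lam)) := by
  obtain ⟨hRo, hRdet⟩ := hR
  obtain ⟨hR'o, hR'det⟩ := hR'
  have hRo' : R * Rᵀ = 1 := mul_eq_one_comm.mp hRo
  set Q := Rᵀ * R' with hQdef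
  have hQo : Qᵀ * Q = 1 := by
    rw [hQdef, transpose_mul, transpose_transpose]
    calc R'ᵀ * R * (Rᵀ * R') = R'ᵀ * (R * Rᵀ * R') := by simp only [mul_assoc]
      _ = 1 := by rw [hRo', one_mul, hR'o]
  have hQdet : Q.det = 1 := by rw [hQdef, det_mul, det_transpose, hRdet, hR'det, one_mul]
  set S := Q + Qᵀ with hSdef
  have hS : S.IsHermitian := by
    rw [Matrix.IsHermitian, conjTranspose_eq_transpose_of_trivial, hSdef, transpose_add,
      transpose_transpose, add_comm]
  set P : Matrix (Fin n) (Fin n) ℝ := (hS.eigenvectorUnitary : Matrix (Fin n) (Fin n) ℝ)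
    with hPdef
  have hPmem := (hS.eigenvectorUnitary).2
  have hstar : star P = Pᵀ := by
    rw [Matrix.star_eq_conjTranspose, conjTranspose_eq_transpose_of_trivial]
  have hPPT : P * Pᵀ = 1 := by
    have := Matrix.mem_unitaryGroup_iff.mp hPmem
    rwa [hstar] at this
  have hPTP : Pᵀ * P = 1 := by
    have := Matrix.mem_unitaryGroup_iff'.mp hPmem
    rwa [hstar] at this
  set d := hS.eigenvalues with hddef
  have hSP : Pᵀ * S * P = diagonal d := by
    have h1 : star P * S * P = diagonal (RCLike.ofReal ∘ hS.eigenvalues) := by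
      have hs := hS.spectral_theorem
      rw [Unitary.conjStarAlgAut_apply] at hs
      conv_lhs => rw [hs]
      rw [hstar]
      simp only [← mul_assoc]
      rw [hPTP, one_mul, mul_assoc, hPTP, mul_one]
    rw [hstar] at h1
    rw [h1]
    apply congrArg diagonal
    funext i
    simp [RCLike.ofReal_real_eq_id, hddef]
  set Q' := Pᵀ * Q * P with hQ'def
  have hQ'T : Q'ᵀ = Pᵀ * Qᵀ * P := by
    rw [hQ'def, transpose_mul, transpose_mul, transpose_transpose, mul_assoc]
  have hconj_mul : ∀ X Y : Matrix (Fin n) (Fin n) ℝ,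
      (Pᵀ * X * P) * (Pᵀ * Y * P) = Pᵀ * (X * Y) * P := by
    intro X Y
    calc (Pᵀ * X * P) * (Pᵀ * Y * P)
        = Pᵀ * (X * ((P * Pᵀ) * (Y * P))) := by simp only [mul_assoc]
      _ = Pᵀ * (X * (Y * P)) := by rw [hPPT, one_mul]
      _ = Pᵀ * (X * Y) * P := by simp only [mul_assoc]
  have hQ'o : Q'ᵀ * Q' = 1 := by
    rw [hQ'T, hQ'def, hconj_mul, hQo, mul_one, hPTP]
  have hdP : P.det * P.det = 1 := by
    have := congrArg Matrix.det hPPT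
    rwa [det_mul, det_transpose, det_one] at this
  have hQ'det : Q'.det = 1 := by
    rw [hQ'def, det_mul, det_mul, det_transpose, hQdet, mul_one, mul_comm]
    exact hdP
  have hQ'D : Q' + Q'ᵀ = diagonal d := by
    rw [hQ'T, hQ'def]
    have : Pᵀ * Q * P + Pᵀ * Qᵀ * P = Pᵀ * (Q + Qᵀ) * P := by
      rw [mul_add, add_mul]
    rw [this, ← hSdef, hSP]
  obtain ⟨W', hW'skew, hW'exp, h, hWW, hb⟩ := main_construction Q' d hQ'o hQ'det hQ'D
  have hPunit : IsUnit P := by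
    apply (Matrix.isUnit_iff_isUnit_det P).mpr
    exact IsUnit.of_mul_eq_one _ hdP
  have hPinv : P⁻¹ = Pᵀ := Matrix.inv_eq_right_inv hPPT
  refine ⟨P * W' * Pᵀ, ?_, ?_, ?_⟩
  · rw [transpose_mul, transpose_mul, transpose_transpose, hW'skew, neg_mul, mul_neg,
      ← mul_assoc]
  · have hexp : exp (P * W' * Pᵀ) = P * Q' * Pᵀ := by
      rw [← hPinv, Matrix.exp_conj P W' hPunit, hW'exp]
    have hPQ'P : P * Q' * Pᵀ = Q := by
      rw [hQ'def]
      calc P * (Pᵀ * Q * P) * Pᵀ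
          = (P * Pᵀ) * (Q * (P * Pᵀ)) := by simp only [mul_assoc]
        _ = Q := by rw [hPPT, one_mul, mul_one]
    rw [hexp, hPQ'P, hQdef, ← mul_assoc, hRo', one_mul]
  · intro μ hμ hμ0
    exact eigen_of_sq_diag W' h hWW hb (eigen_transfer P W' hPPT hPTP hμ) hμ0
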